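/- arXiv:1710.07851 — 2 statements merged into one kernel-verified Lean document; each statement's English description precedes it below -/
import Mathlib

section
/- In ℚ[S_L], any symmetric polynomial evaluated at the Jucys–Murphy elements J_2,...,J_L lies in the center Z(ℚ[S_L]). -/
/-- The Jucys–Murphy element `J_k = ∑_{i<k} (i k)` in `ℚ[S_L]`. -/
noncomputable def jucysMurphy (L : ℕ) (k : Fin L) :
    MonoidAlgebra ℚ (Equiv.Perm (Fin L)) :=
  ∑ i ∈ Finset.univ.filter (· < k),
    MonoidAlgebra.of ℚ (Equiv.Perm (Fin L)) (Equiv.swap i k)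

/-- Evaluation of a multivariate polynomial at a family of (commuting) elements of a
(possibly noncommutative) `ℚ`-algebra: each monomial `∏ xᵢ^{mᵢ}` is evaluated as the
product in the order of the indices. -/
noncomputable def evalNC {n : ℕ} {A : Type*} [Ring A] [Algebra ℚ A]
    (p : MvPolynomial (Fin n) ℚ) (v : Fin n → A) : A :=
  (AddMonoidAlgebra.coeff p).sum fun m a => a • (List.ofFn fun i => v i ^ m i).prod

open Finset Equiv MonoidAlgebra MvPolynomial

lemma of_conj_jm {L : ℕ} (k : Fin L) (σ : Equiv.Perm (Fin L)) (hk : σ k = k)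
    (h : ∀ j, j < k ↔ σ j < k) :
    MonoidAlgebra.of ℚ (Equiv.Perm (Fin L)) σ * jucysMurphy L k
      = jucysMurphy L k * MonoidAlgebra.of ℚ (Equiv.Perm (Fin L)) σ := by
  unfold jucysMurphy
  rw [Finset.mul_sum, Finset.sum_mul]
  have key : ∀ i : Fin L,
      MonoidAlgebra.of ℚ (Equiv.Perm (Fin L)) σ * MonoidAlgebra.of ℚ _ (Equiv.swap i k)
        = MonoidAlgebra.of ℚ _ (Equiv.swap (σ i) k) * MonoidAlgebra.of ℚ _ σ := by
    intro i
    rw [← map_mul, ← map_mul]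
    congr 1
    have h2 := Equiv.swap_apply_apply σ i k
    rw [hk] at h2
    rw [h2]
    group
  rw [Finset.sum_congr rfl fun i _ => key i]
  refine Finset.sum_equiv σ (fun i => ?_) (fun i _ => rfl)
  simp only [Finset.mem_filter, Finset.mem_univ, true_and]
  exact h i

lemma jm_commute {L : ℕ} (c d : Fin L) :
    Commute (jucysMurphy L c) (jucysMurphy L d) := by
  suffices H : ∀ c d : Fin L, c < d → Commute (jucysMurphy L c) (jucysMurphy L d) by
    rcases lt_trichotomy c d with h | h | h
    exacts [H c d h, h ▸ Commute.refl _, (H d c h).symm]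
  intro c d hcd
  have hc : jucysMurphy L c = ∑ i ∈ Finset.univ.filter (· < c),
      MonoidAlgebra.of ℚ (Equiv.Perm (Fin L)) (Equiv.swap i c) := rfl
  rw [Commute, SemiconjBy, hc, Finset.sum_mul, Finset.mul_sum]
  refine Finset.sum_congr rfl fun i hi => ?_
  simp only [Finset.mem_filter, Finset.mem_univ, true_and] at hi
  have hic : i < c := hi
  have h3 : (i : ℕ) < (c : ℕ) := hic
  have h4 : (c : ℕ) < (d : ℕ) := hcd
  refine of_conj_jm d (Equiv.swap i c) ?_ ?_
  · exact Equiv.swap_apply_of_ne_of_ne (ne_of_gt (hic.trans hcd)) (ne_of_gt hcd)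
  · intro j
    rw [Equiv.swap_apply_def]
    split_ifs with h1 h2
    · subst h1; simp only [Fin.lt_def]; omega
    · subst h2; simp only [Fin.lt_def]; omega
    · rfl

lemma jm_rel {L : ℕ} (c d : Fin L) (hd : (d : ℕ) = (c : ℕ) + 1) :
    jucysMurphy L d * MonoidAlgebra.of ℚ (Equiv.Perm (Fin L)) (Equiv.swap c d)
      = MonoidAlgebra.of ℚ (Equiv.Perm (Fin L)) (Equiv.swap c d) * jucysMurphy L c + 1 := by
  have hfilter : Finset.univ.filter (· < d) = insert c (Finset.univ.filter (· < c)) := by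
    ext j
    simp only [Finset.mem_filter, Finset.mem_univ, true_and, Finset.mem_insert, Fin.lt_def,
      Fin.ext_iff]
    omega
  unfold jucysMurphy
  rw [hfilter, Finset.sum_insert (by simp only [Finset.mem_filter, Finset.mem_univ, true_and, Fin.lt_def]; omega), add_mul, Finset.sum_mul,
    Finset.mul_sum, ← map_mul, Equiv.swap_mul_self, map_one]
  rw [add_comm]
  congr 1
  refine Finset.sum_congr rfl fun i hi => ?_
  simp only [Finset.mem_filter, Finset.mem_univ, true_and, Fin.lt_def] at hi
  rw [← map_mul, ← map_mul]
  congr 1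
  have hic : i ≠ c := Fin.ne_of_val_ne (by omega)
  have hid : i ≠ d := Fin.ne_of_val_ne (by omega)
  have h2 := Equiv.swap_apply_apply (Equiv.swap c d) i c
  rw [Equiv.swap_apply_of_ne_of_ne hic hid, Equiv.swap_apply_left, Equiv.swap_inv] at h2
  rw [h2, mul_assoc, Equiv.swap_mul_self, mul_one]

lemma evalNC_algHom' {n : ℕ} {A B : Type*} [Ring A] [Algebra ℚ A] [CommRing B] [Algebra ℚ B]
    (f : B →ₐ[ℚ] A) (w : Fin n → B) (p : MvPolynomial (Fin n) ℚ) :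
    ((AddMonoidAlgebra.coeff p).sum fun m a => a • (List.ofFn fun i => f (w i) ^ m i).prod) = f (MvPolynomial.aeval w p) := by
  rw [MvPolynomial.aeval_def, MvPolynomial.eval₂_eq', map_sum, Finsupp.sum]
  refine Finset.sum_congr rfl fun m _ => ?_
  rw [map_mul, AlgHom.commutes, ← Algebra.smul_def]
  congr 1
  rw [← List.prod_ofFn, map_list_prod, List.map_ofFn]
  exact congrArg (fun l => List.prod (List.ofFn l)) (funext fun i => (map_pow f (w i) (m i)).symm)

set_option maxHeartbeats 1000000 in
/-- Any symmetric polynomial evaluated at the Jucys–Murphy elements `J_2, …, J_L`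
(here `L = n + 1`, so that there are `L - 1` variables) lies in the center of `ℚ[S_L]`:
it commutes with every element of the group algebra. -/
theorem stmt9 (n : ℕ) (p : MvPolynomial (Fin n) ℚ) (hp : p.IsSymmetric)
    (x : MonoidAlgebra ℚ (Equiv.Perm (Fin (n + 1)))) :
    evalNC p (fun i => jucysMurphy (n + 1) i.succ) * x =
      x * evalNC p (fun i => jucysMurphy (n + 1) i.succ) := by
  classical
  set J : Fin n → MonoidAlgebra ℚ (Equiv.Perm (Fin (n + 1))) :=
    fun i => jucysMurphy (n + 1) i.succ with hJdef
  have hcomm : ∀ a ∈ Set.range J, ∀ b ∈ Set.range J, a * b = b * a := by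
    rintro _ ⟨i, rfl⟩ _ ⟨j, rfl⟩
    exact jm_commute _ _
  set C : Subalgebra ℚ (MonoidAlgebra ℚ (Equiv.Perm (Fin (n + 1)))) :=
    Algebra.adjoin ℚ (Set.range J) with hCdef
  letI : CommRing C := Algebra.adjoinCommRingOfComm ℚ hcomm
  set vC : Fin n → C := fun i => ⟨J i, Algebra.subset_adjoin ⟨i, rfl⟩⟩ with hvC
  have hzeq : evalNC p J = C.val (MvPolynomial.aeval vC p) := evalNC_algHom' C.val vC p
  have key : ∀ k : Fin n,
      MonoidAlgebra.of ℚ (Equiv.Perm (Fin (n + 1))) (Equiv.swap k.castSucc k.succ) * evalNC p J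
        = evalNC p J
            * MonoidAlgebra.of ℚ (Equiv.Perm (Fin (n + 1))) (Equiv.swap k.castSucc k.succ) := by
    intro k
    set c : Fin (n + 1) := k.castSucc with hc
    set d : Fin (n + 1) := k.succ with hd
    set S : MonoidAlgebra ℚ (Equiv.Perm (Fin (n + 1))) :=
      MonoidAlgebra.of ℚ (Equiv.Perm (Fin (n + 1))) (Equiv.swap c d) with hS
    have hcv : (c : ℕ) = (k : ℕ) := by rw [hc]; simp
    have hdv : (d : ℕ) = (k : ℕ) + 1 := by rw [hd]; simp
    have hdc : (d : ℕ) = (c : ℕ) + 1 := by omega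
    set a := jucysMurphy (n + 1) c with ha
    set b := jucysMurphy (n + 1) d with hb
    have hSS : S * S = 1 := by rw [hS, ← map_mul, Equiv.swap_mul_self, map_one]
    have hbS : b * S = S * a + 1 := jm_rel c d hdc
    have hSa : S * a = b * S - 1 := by rw [hbS]; abel
    have hSb : S * b = a * S + 1 := by
      calc S * b = S * b * (S * S) := by rw [hSS, mul_one]
        _ = S * (b * S) * S := by noncomm_ring
        _ = S * (S * a + 1) * S := by rw [hbS]
        _ = (S * S) * (a * S) + S * S := by noncomm_ring
        _ = a * S + 1 := by rw [hSS]; noncomm_ring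
    have hab : a * b = b * a := jm_commute c d
    have hSsum : S * (a + b) = (a + b) * S := by
      rw [mul_add, add_mul, hSa, hSb]; abel
    have hSmul : S * (a * b) = (a * b) * S := by
      calc S * (a * b) = (S * a) * b := by rw [mul_assoc]
        _ = (b * S - 1) * b := by rw [hSa]
        _ = b * (S * b) - b := by noncomm_ring
        _ = b * (a * S + 1) - b := by rw [hSb]
        _ = (b * a) * S := by noncomm_ring
        _ = (a * b) * S := by rw [hab]
    set Z : Subalgebra ℚ C := (Subalgebra.centralizer ℚ {S}).comap C.val with hZdef
    have hZmem : ∀ u : C, S * C.val u = C.val u * S → u ∈ Z := by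
      intro u hu
      rw [hZdef, Subalgebra.mem_comap, Subalgebra.mem_centralizer_iff]
      rintro g hg
      rw [Set.mem_singleton_iff] at hg
      rw [hg]
      exact hu
    have hZmem' : ∀ u : C, u ∈ Z → S * C.val u = C.val u * S := by
      intro u hu
      rw [hZdef, Subalgebra.mem_comap, Subalgebra.mem_centralizer_iff] at hu
      exact hu S rfl
    suffices hin : MvPolynomial.aeval vC p ∈ Z by
      rw [hzeq]
      exact hZmem' _ hin
    have hrest : ∀ i : Fin n, (i : ℕ) + 1 ≠ (k : ℕ) → (i : ℕ) ≠ (k : ℕ) →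
        S * J i = J i * S := by
      intro i h1 h2
      refine of_conj_jm i.succ (Equiv.swap c d) ?_ ?_
      · refine Equiv.swap_apply_of_ne_of_ne ?_ ?_ <;> refine Fin.ne_of_val_ne ?_ <;>
          simp only [Fin.val_succ] <;> omega
      · intro j
        rw [Equiv.swap_apply_def]
        split_ifs with e1 e2
        · have e1' : (j : ℕ) = (c : ℕ) := congrArg Fin.val e1
          simp only [Fin.lt_def, Fin.val_succ]
          omega
        · have e2' : (j : ℕ) = (d : ℕ) := congrArg Fin.val e2
          simp only [Fin.lt_def, Fin.val_succ]
          omega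
        · rfl
    by_cases hk0 : (k : ℕ) = 0
    · have ha0 : a = 0 := by
        have hfil : Finset.univ.filter (· < c) = (∅ : Finset (Fin (n + 1))) := by
          ext j
          simp only [Finset.mem_filter, Finset.mem_univ, true_and, Fin.lt_def,
            Finset.notMem_empty, iff_false, not_lt]
          omega
        rw [ha, jucysMurphy, hfil, Finset.sum_empty]
      have hall : ∀ i, vC i ∈ Z := by
        intro i
        apply hZmem
        rcases eq_or_ne ((i : ℕ)) ((k : ℕ)) with hik | hik
        · have hisucc : i.succ = d := Fin.ext (by simp only [Fin.val_succ]; omega)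
          have hJi : C.val (vC i) = b := by rw [hb, ← hisucc]; exact rfl
          rw [hJi, hSb, hbS, ha0, zero_mul, mul_zero, zero_add]
        · exact hrest i (by omega) (by omega)
      have hmem : MvPolynomial.aeval vC p ∈ Algebra.adjoin ℚ (Set.range vC) := by
        rw [Algebra.adjoin_range_eq_range_aeval]
        exact ⟨p, rfl⟩
      exact Algebra.adjoin_le (by rintro _ ⟨i, rfl⟩; exact hall i) hmem
    · set i₁ : Fin n := ⟨(k : ℕ) - 1, by omega⟩ with hi₁
      have hi₁v : (i₁ : ℕ) = (k : ℕ) - 1 := rfl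
      have hi₁succ : i₁.succ = c := Fin.ext (by simp only [Fin.val_succ]; omega)
      have hJi₁ : C.val (vC i₁) = a := by rw [ha, ← hi₁succ]; exact rfl
      have hJk : C.val (vC k) = b := by rw [hb, hd]; exact rfl
      have hi₁k : i₁ ≠ k := Fin.ne_of_val_ne (by omega)
      have hZsum : vC i₁ + vC k ∈ Z := by
        apply hZmem
        have hcoe : C.val (vC i₁ + vC k) = a + b := by rw [map_add, hJi₁, hJk]
        rw [hcoe]
        exact hSsum
      have hZprod : vC i₁ * vC k ∈ Z := by
        apply hZmem
        have hcoe : C.val (vC i₁ * vC k) = a * b := by rw [map_mul, hJi₁, hJk]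
        rw [hcoe]
        exact hSmul
      have hZrest : ∀ i : Fin n, i ≠ i₁ → i ≠ k → vC i ∈ Z := by
        intro i h1 h2
        apply hZmem
        refine hrest i ?_ ?_
        · intro hcon
          exact h1 (Fin.ext (by omega))
        · intro hcon
          exact h2 (Fin.ext hcon)
      obtain ⟨q, hq⟩ := MvPolynomial.esymmAlgHom_fin_surjective (R := ℚ) (m := n) (n := n)
        le_rfl ⟨p, (MvPolynomial.mem_symmetricSubalgebra p).2 hp⟩
      have hpq : p = MvPolynomial.aeval
          (fun i : Fin n => MvPolynomial.esymm (Fin n) ℚ ((i : ℕ) + 1)) q := by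
        have h2 := congrArg Subtype.val hq
        rw [MvPolynomial.esymmAlgHom_apply] at h2
        exact h2.symm
      have hgoal : MvPolynomial.aeval vC p
          = MvPolynomial.aeval (fun i : Fin n =>
              MvPolynomial.aeval vC (MvPolynomial.esymm (Fin n) ℚ ((i : ℕ) + 1))) q := by
        conv_lhs => rw [hpq]
        rw [← AlgHom.comp_apply, MvPolynomial.comp_aeval]
      rw [hgoal]
      have hgen : ∀ m : ℕ, MvPolynomial.aeval vC (MvPolynomial.esymm (Fin n) ℚ m) ∈ Z := by
        intro m
        have hes : MvPolynomial.aeval vC (MvPolynomial.esymm (Fin n) ℚ m)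
            = ∑ t ∈ Finset.powersetCard m Finset.univ, ∏ i ∈ t, vC i := by
          rw [MvPolynomial.esymm, map_sum]
          refine Finset.sum_congr rfl fun t _ => ?_
          rw [map_prod]
          exact Finset.prod_congr rfl fun i _ => MvPolynomial.aeval_X _ _
        rw [hes]
        set rest : Finset (Fin n) := (Finset.univ.erase i₁).erase k with hrestdef
        have hkrest : k ∉ rest := Finset.notMem_erase _ _
        have hi₁rest : i₁ ∉ insert k rest := by
          simp [hrestdef, hi₁k]
        have huniv : (Finset.univ : Finset (Fin n)) = insert i₁ (insert k rest) := by
          ext j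
          simp only [Finset.mem_univ, true_iff, Finset.mem_insert, hrestdef, Finset.mem_erase,
            and_true]
          by_cases h1 : j = i₁
          · exact Or.inl h1
          by_cases h2 : j = k
          · exact Or.inr (Or.inl h2)
          exact Or.inr (Or.inr ⟨h2, h1⟩)
        have hEins : ∀ (y : Fin n) (T : Finset (Fin n)), y ∉ T → ∀ m : ℕ,
            ∑ t ∈ Finset.powersetCard (m + 1) (insert y T), ∏ i ∈ t, vC i
              = (∑ t ∈ Finset.powersetCard (m + 1) T, ∏ i ∈ t, vC i)
                + vC y * ∑ t ∈ Finset.powersetCard m T, ∏ i ∈ t, vC i := by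
          intro y T hy m
          rw [Finset.powersetCard_succ_insert hy, Finset.sum_union ?disj, Finset.sum_image ?inj,
            Finset.mul_sum]
          · congr 1
            refine Finset.sum_congr rfl fun t ht => ?_
            rw [Finset.mem_powersetCard] at ht
            rw [Finset.prod_insert fun hmem => hy (ht.1 hmem)]
          case inj =>
            intro u hu v hv huv
            rw [Finset.mem_coe, Finset.mem_powersetCard] at hu hv
            have hyu : y ∉ u := fun hmem => hy (hu.1 hmem)
            have hyv : y ∉ v := fun hmem => hy (hv.1 hmem)
            rw [← Finset.erase_insert hyu, ← Finset.erase_insert hyv, huv]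
          case disj =>
            rw [Finset.disjoint_left]
            intro t ht ht'
            rw [Finset.mem_powersetCard] at ht
            rw [Finset.mem_image] at ht'
            obtain ⟨u, _, rfl⟩ := ht'
            exact hy (ht.1 (Finset.mem_insert_self y u))
        have hE0 : ∀ T : Finset (Fin n), ∑ t ∈ Finset.powersetCard 0 T, ∏ i ∈ t, vC i = 1 := by
          intro T
          rw [Finset.powersetCard_zero, Finset.sum_singleton, Finset.prod_empty]
        have hErest : ∀ m : ℕ, (∑ t ∈ Finset.powersetCard m rest, ∏ i ∈ t, vC i) ∈ Z := by
          intro m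
          refine Subalgebra.sum_mem _ fun t ht => Subalgebra.prod_mem _ fun i hi => ?_
          rw [Finset.mem_powersetCard] at ht
          have hmem := ht.1 hi
          rw [hrestdef, Finset.mem_erase, Finset.mem_erase] at hmem
          exact hZrest i hmem.2.1 hmem.1
        rw [huniv]
        match m with
        | 0 =>
          rw [hE0]
          exact one_mem Z
        | 1 =>
          rw [hEins i₁ _ hi₁rest 0, hEins k rest hkrest 0, hE0, hE0]
          have hrw : (∑ t ∈ Finset.powersetCard 1 rest, ∏ i ∈ t, vC i) + vC k * 1 + vC i₁ * 1
              = (∑ t ∈ Finset.powersetCard 1 rest, ∏ i ∈ t, vC i) + (vC i₁ + vC k) := by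
            rw [mul_one, mul_one, add_assoc, add_comm (vC k) (vC i₁)]
          rw [hrw]
          exact add_mem (hErest 1) hZsum
        | (m + 2) =>
          rw [hEins i₁ _ hi₁rest (m + 1), hEins k rest hkrest (m + 1), hEins k rest hkrest m]
          have hrw : (∑ t ∈ Finset.powersetCard (m + 2) rest, ∏ i ∈ t, vC i)
                + vC k * ∑ t ∈ Finset.powersetCard (m + 1) rest, ∏ i ∈ t, vC i
                + vC i₁ * ((∑ t ∈ Finset.powersetCard (m + 1) rest, ∏ i ∈ t, vC i)
                  + vC k * ∑ t ∈ Finset.powersetCard m rest, ∏ i ∈ t, vC i)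
              = (∑ t ∈ Finset.powersetCard (m + 2) rest, ∏ i ∈ t, vC i)
                + (vC i₁ + vC k) * (∑ t ∈ Finset.powersetCard (m + 1) rest, ∏ i ∈ t, vC i)
                + (vC i₁ * vC k) * ∑ t ∈ Finset.powersetCard m rest, ∏ i ∈ t, vC i := by
            rw [mul_add, ← mul_assoc, add_mul]
            abel
          rw [hrw]
          exact add_mem (add_mem (hErest _) (mul_mem hZsum (hErest _)))
            (mul_mem hZprod (hErest _))
      have hmem : MvPolynomial.aeval (fun i : Fin n =>
            MvPolynomial.aeval vC (MvPolynomial.esymm (Fin n) ℚ ((i : ℕ) + 1))) q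
          ∈ Algebra.adjoin ℚ (Set.range fun i : Fin n =>
              MvPolynomial.aeval vC (MvPolynomial.esymm (Fin n) ℚ ((i : ℕ) + 1))) := by
        rw [Algebra.adjoin_range_eq_range_aeval]
        exact ⟨q, rfl⟩
      exact Algebra.adjoin_le (by rintro _ ⟨i, rfl⟩; exact hgen _) hmem
  have hall : ∀ g : Equiv.Perm (Fin (n + 1)),
      MonoidAlgebra.of ℚ (Equiv.Perm (Fin (n + 1))) g * evalNC p J
        = evalNC p J * MonoidAlgebra.of ℚ (Equiv.Perm (Fin (n + 1))) g := by
    intro g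
    have hg : g ∈ Submonoid.closure
        (Set.range fun i : Fin n => Equiv.swap i.castSucc i.succ) := by
      rw [Equiv.Perm.mclosure_swap_castSucc_succ]
      exact Submonoid.mem_top g
    induction hg using Submonoid.closure_induction with
    | mem y hy => obtain ⟨i, rfl⟩ := hy; exact key i
    | one => rw [map_one, one_mul, mul_one]
    | mul y z hy hz ihy ihz => rw [map_mul, mul_assoc, ihz, ← mul_assoc, ihy, mul_assoc]
  induction x using MonoidAlgebra.induction_on with
  | of g => exact (hall g).symm
  | add f g hf hg => rw [mul_add, add_mul, hf, hg]
  | smul r f hf => rw [mul_smul_comm, smul_mul_assoc, hf]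
end

section
/- The complete homogeneous symmetric polynomial in the Jucys–Murphy elements expands as h_k(J_2,...,J_L) = Σ over sequences of transpositions (τ_1,...,τ_k) with weakly increasing maxima (max τ_1 ≤ max τ_2 ≤ ... ≤ max τ_k) of the product τ_1 τ_2 ⋯ τ_k in ℚ[S_L]. -/
open Finset in
/-- Noncommutative expansion of a product of sums indexed by `Fin k`. -/
lemma prod_ofFn_sum {R : Type*} [NonAssocSemiring R] :
    ∀ (k : ℕ) {α : Type*} [DecidableEq α] [Fintype α] (S : Fin k → Finset α)
      (g : Fin k → α → R),
      (List.ofFn fun j => ∑ a ∈ S j, g j a).prod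
        = ∑ a ∈ Fintype.piFinset S, (List.ofFn fun j => g j (a j)).prod
  | 0, α, _, _, S, g => by
      simp
  | (k+1), α, _, _, S, g => by
      have hpi : Fintype.piFinset S
          = ((S 0) ×ˢ Fintype.piFinset (Fin.tail S)).map
              (Fin.consEquiv fun _ => α).toEmbedding := by
        have := Finset.filter_piFinset_eq_map_consEquiv S (fun _ => True)
        simpa using this
      rw [List.ofFn_succ, List.prod_cons,
        prod_ofFn_sum k (fun j => S j.succ) (fun j a => g j.succ a),
        Finset.sum_mul_sum, hpi, Finset.sum_map, Finset.sum_product]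
      refine Finset.sum_congr rfl fun x hx => Finset.sum_congr rfl fun a ha => ?_
      rw [List.ofFn_succ, List.prod_cons]
      simp [Fin.consEquiv]

/-- `h_k(J_2,…,J_L)` (with `L = n + 1`; the `n` variables are `J_2,…,J_L`), i.e. the complete
homogeneous symmetric polynomial of degree `k` in the Jucys–Murphy elements (the sum over all
multisets of `k` variables, products taken in increasing index order), equals the sum, over all
sequences `(τ_1,…,τ_k)` of transpositions with weakly increasing maxima
`max τ_1 ≤ ⋯ ≤ max τ_k`, of the product `τ_1 τ_2 ⋯ τ_k` in `ℚ[S_L]`.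
A transposition is encoded as an ordered pair `(a, b)` with `a < b`, so `max τ = b`. -/
theorem stmt11 (n k : ℕ) :
    ∑ m ∈ (Finset.univ : Finset (Fin n)).sym k,
        (((m : Multiset (Fin n)).sort (· ≤ ·)).map fun i => jucysMurphy (n + 1) i.succ).prod =
      ∑ t ∈ Finset.univ.filter (fun t : Fin k → Fin (n + 1) × Fin (n + 1) =>
            (∀ j, (t j).1 < (t j).2) ∧ Monotone fun j => (t j).2),
        MonoidAlgebra.of ℚ (Equiv.Perm (Fin (n + 1)))
          (List.ofFn fun j => Equiv.swap (t j).1 (t j).2).prod := by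
  classical
  set G : (Fin k → Fin (n+1)) → MonoidAlgebra ℚ (Equiv.Perm (Fin (n+1))) :=
    fun b => (List.ofFn fun j => jucysMurphy (n+1) (b j)).prod with hG
  -- Step 1: rewrite the RHS as a sum over monotone sequences of maxima `b`.
  have hR :
      (∑ t ∈ Finset.univ.filter (fun t : Fin k → Fin (n + 1) × Fin (n + 1) =>
            (∀ j, (t j).1 < (t j).2) ∧ Monotone fun j => (t j).2),
        MonoidAlgebra.of ℚ (Equiv.Perm (Fin (n + 1)))
          (List.ofFn fun j => Equiv.swap (t j).1 (t j).2).prod)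
      = ∑ b ∈ Finset.univ.filter (fun b : Fin k → Fin (n+1) => Monotone b), G b := by
    have h1 :
        (∑ t ∈ Finset.univ.filter (fun t : Fin k → Fin (n + 1) × Fin (n + 1) =>
            (∀ j, (t j).1 < (t j).2) ∧ Monotone fun j => (t j).2),
          MonoidAlgebra.of ℚ (Equiv.Perm (Fin (n + 1)))
            (List.ofFn fun j => Equiv.swap (t j).1 (t j).2).prod)
        = ∑ p ∈ (Finset.univ.filter fun b : Fin k → Fin (n+1) => Monotone b).sigma
              (fun b => Fintype.piFinset fun j => Finset.univ.filter (· < b j)),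
            MonoidAlgebra.of ℚ (Equiv.Perm (Fin (n + 1)))
              (List.ofFn fun j => Equiv.swap (p.2 j) (p.1 j)).prod := by
      refine Finset.sum_nbij'
        (i := fun t => ⟨fun j => (t j).2, fun j => (t j).1⟩)
        (j := fun p => fun j => (p.2 j, p.1 j)) ?_ ?_ ?_ ?_ ?_
      · intro t ht
        simp only [Finset.mem_filter, Finset.mem_univ, true_and] at ht
        simp only [Finset.mem_sigma, Finset.mem_filter, Finset.mem_univ, true_and,
          Fintype.mem_piFinset]
        exact ⟨ht.2, fun j => ht.1 j⟩
      · intro p hp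
        simp only [Finset.mem_sigma, Finset.mem_filter, Finset.mem_univ, true_and,
          Fintype.mem_piFinset] at hp
        simp only [Finset.mem_filter, Finset.mem_univ, true_and]
        exact ⟨fun j => hp.2 j, hp.1⟩
      · intro t ht; rfl
      · intro p hp; rfl
      · intro t ht; rfl
    rw [h1, Finset.sum_sigma]
    refine Finset.sum_congr rfl fun b hb => ?_
    have h2 : ∀ a : Fin k → Fin (n+1),
        MonoidAlgebra.of ℚ (Equiv.Perm (Fin (n + 1)))
            (List.ofFn fun j => Equiv.swap (a j) (b j)).prod
          = (List.ofFn fun j =>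
              MonoidAlgebra.of ℚ (Equiv.Perm (Fin (n + 1))) (Equiv.swap (a j) (b j))).prod := by
      intro a
      rw [map_list_prod, List.map_ofFn]
      rfl
    simp only [h2]
    rw [← prod_ofFn_sum k (fun j => Finset.univ.filter (· < b j))
      (fun j a => MonoidAlgebra.of ℚ (Equiv.Perm (Fin (n + 1))) (Equiv.swap a (b j)))]
    rfl
  rw [hR]
  -- Step 2: terms with some `b j = 0` vanish.
  have hzero : jucysMurphy (n+1) 0 = 0 := by
    rw [jucysMurphy]
    convert Finset.sum_empty
    simp [Finset.filter_eq_empty_iff]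
  have hsub :
      (∑ b ∈ Finset.univ.filter (fun b : Fin k → Fin (n+1) => Monotone b), G b)
      = ∑ b ∈ Finset.univ.filter
          (fun b : Fin k → Fin (n+1) => Monotone b ∧ ∀ j, b j ≠ 0), G b := by
    symm
    refine Finset.sum_subset ?_ ?_
    · intro b hb
      simp only [Finset.mem_filter, Finset.mem_univ, true_and] at hb ⊢
      exact hb.1
    · intro b hb hb'
      simp only [Finset.mem_filter, Finset.mem_univ, true_and, not_and, not_forall,
        not_ne_iff] at hb hb'
      obtain ⟨j, hj⟩ := hb' hb
      rw [hG]
      refine List.prod_eq_zero ?_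
      rw [List.mem_ofFn]
      refine ⟨j, ?_⟩
      show jucysMurphy (n+1) (b j) = 0
      rw [hj, hzero]
  rw [hsub]
  -- Step 3: bijection with multisets.
  refine Finset.sum_bij
    (i := fun m _ => fun j : Fin k =>
      (((m : Multiset (Fin n)).sort (· ≤ ·)).get
        (Fin.cast (by simp [m.2]) j)).succ) ?_ ?_ ?_ ?_
  · intro m _
    simp only [Finset.mem_filter, Finset.mem_univ, true_and]
    have hs : List.ofFn (fun j : Fin k =>
        ((m : Multiset (Fin n)).sort (· ≤ ·)).get (Fin.cast (by simp [m.2]) j))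
        = (m : Multiset (Fin n)).sort (· ≤ ·) := by
      refine List.ext_get (by simp [m.2]) fun i h1 h2 => ?_
      simp
    constructor
    · have hmono : Monotone fun j : Fin k =>
          ((m : Multiset (Fin n)).sort (· ≤ ·)).get (Fin.cast (by simp [m.2]) j) := by
        rw [← List.sortedLE_ofFn_iff, hs]
        exact (Multiset.pairwise_sort _ _).sortedLE
      exact fun a b hab => Fin.succ_le_succ_iff.mpr (hmono hab)
    · intro j
      exact Fin.succ_ne_zero _
  · intro m₁ h₁ m₂ h₂ hEq
    have : ∀ j : Fin k,
        ((m₁ : Multiset (Fin n)).sort (· ≤ ·)).get (Fin.cast (by simp [m₁.2]) j)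
        = ((m₂ : Multiset (Fin n)).sort (· ≤ ·)).get (Fin.cast (by simp [m₂.2]) j) := by
      intro j
      have := congrFun hEq j
      exact Fin.succ_injective _ this
    have hlist : (m₁ : Multiset (Fin n)).sort (· ≤ ·)
        = (m₂ : Multiset (Fin n)).sort (· ≤ ·) := by
      refine List.ext_get (by simp [m₁.2, m₂.2]) fun i h1 h2 => ?_
      have := this ⟨i, by simpa [m₁.2] using h1⟩
      simpa using this
    have : (m₁ : Multiset (Fin n)) = (m₂ : Multiset (Fin n)) := by
      rw [← Multiset.sort_eq (m₁ : Multiset (Fin n)) (· ≤ ·),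
        ← Multiset.sort_eq (m₂ : Multiset (Fin n)) (· ≤ ·), hlist]
    exact Subtype.ext this
  · intro b hb
    simp only [Finset.mem_filter, Finset.mem_univ, true_and] at hb
    obtain ⟨hmono, hne⟩ := hb
    set b' : Fin k → Fin n := fun j => (b j).pred (hne j) with hb'
    have hsucc : ∀ j, (b' j).succ = b j := fun j => Fin.succ_pred _ _
    have hmono' : Monotone b' := by
      intro x y hxy
      have := hmono hxy
      rw [← Fin.succ_le_succ_iff, hsucc, hsucc]
      exact this
    refine ⟨⟨(List.ofFn b' : List (Fin n)), by simp⟩, ?_, ?_⟩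
    · exact Finset.mem_sym_iff.mpr fun a _ => Finset.mem_univ a
    · have hsort : Multiset.sort ((List.ofFn b' : List (Fin n)) : Multiset (Fin n)) (· ≤ ·)
          = List.ofFn b' := by
        refine List.Perm.eq_of_sortedLE (Multiset.pairwise_sort _ _).sortedLE ?_ ?_
        · exact List.sortedLE_ofFn_iff.mpr hmono'
        · exact Multiset.coe_eq_coe.mp (Multiset.sort_eq _ _)
      funext j
      have hcoe : ((⟨(List.ofFn b' : List (Fin n)), by simp⟩ :
          Sym (Fin n) k) : Multiset (Fin n))
          = ((List.ofFn b' : List (Fin n)) : Multiset (Fin n)) := rfl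
      simp only [List.get_eq_getElem]
      rw [List.getElem_of_eq (hcoe ▸ hsort)]
      simp only [List.getElem_ofFn]
      exact hsucc j
  · intro m _
    have hs : List.ofFn (fun j : Fin k =>
        ((m : Multiset (Fin n)).sort (· ≤ ·)).get (Fin.cast (by simp [m.2]) j))
        = (m : Multiset (Fin n)).sort (· ≤ ·) := by
      refine List.ext_get (by simp [m.2]) fun i h1 h2 => ?_
      simp
    rw [hG]
    have : ((m : Multiset (Fin n)).sort (· ≤ ·)).map (fun i => jucysMurphy (n + 1) i.succ)
        = List.ofFn fun j : Fin k => jucysMurphy (n+1)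
            (((m : Multiset (Fin n)).sort (· ≤ ·)).get (Fin.cast (by simp [m.2]) j)).succ := by
      conv_lhs => rw [← hs]
      rw [List.map_ofFn]
      rfl
    rw [this]
end
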